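/- For $\lambda \in (0,1)$, the function $F(x) = 2(2\sin(x/2))^{\lambda} + (2\sin(3x/2))^{\lambda}$ is concave on $[\pi/3, \pi/2)$, and consequently $F(x) \ge 2 + 2^{\lambda}$ for all $x \in [\pi/3, \pi/2)$, with equality only at $x = \pi/3$. -/

import Mathlib

open Real Set

lemma concave_aux (lam : ℝ) (h0 : 0 < lam) (h1 : lam < 1) {c : ℝ} (hc : 0 ≤ c)
    (h : ∀ x ∈ Set.Icc (Real.pi/3) (Real.pi/2), c*x ∈ Set.Icc 0 Real.pi) :
    ConcaveOn ℝ (Set.Icc (Real.pi/3) (Real.pi/2)) (fun x => (2 * Real.sin (c*x)) ^ lam) := by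
  refine ⟨convex_Icc _ _, ?_⟩
  intro x hx y hy a b ha hb hab
  simp only [smul_eq_mul]
  have hsin := strictConcaveOn_sin_Icc.concaveOn
  have hx' := h x hx
  have hy' := h y hy
  have hsum : a * Real.sin (c*x) + b * Real.sin (c*y) ≤ Real.sin (c*(a*x+b*y)) := by
    have h2 := hsin.2 hx' hy' ha hb hab
    simp only [smul_eq_mul] at h2
    have : c*(a*x+b*y) = a*(c*x)+b*(c*y) := by ring
    rw [this]; exact h2
  have hsx : 0 ≤ Real.sin (c*x) := Real.sin_nonneg_of_nonneg_of_le_pi hx'.1 hx'.2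
  have hsy : 0 ≤ Real.sin (c*y) := Real.sin_nonneg_of_nonneg_of_le_pi hy'.1 hy'.2
  have hrp := (Real.concaveOn_rpow h0.le h1.le).2
    (show (2*Real.sin (c*x)) ∈ Set.Ici (0:ℝ) by simp; positivity)
    (show (2*Real.sin (c*y)) ∈ Set.Ici (0:ℝ) by simp; positivity) ha hb hab
  simp only [smul_eq_mul] at hrp
  refine hrp.trans (Real.rpow_le_rpow (by positivity) (by nlinarith) h0.le)

theorem stmt_13 (lam : ℝ) (hlam0 : 0 < lam) (hlam1 : lam < 1) :
    ConcaveOn ℝ (Set.Ico (Real.pi / 3) (Real.pi / 2))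
      (fun x : ℝ => 2 * (2 * Real.sin (x / 2)) ^ lam + (2 * Real.sin (3 * x / 2)) ^ lam) ∧
    ∀ x ∈ Set.Ico (Real.pi / 3) (Real.pi / 2),
      2 + (2 : ℝ) ^ lam ≤ 2 * (2 * Real.sin (x / 2)) ^ lam + (2 * Real.sin (3 * x / 2)) ^ lam ∧
      (2 * (2 * Real.sin (x / 2)) ^ lam + (2 * Real.sin (3 * x / 2)) ^ lam = 2 + (2 : ℝ) ^ lam →
        x = Real.pi / 3) := by
  have pi_pos := Real.pi_pos
  have e1 : (fun x:ℝ => 2*(2*Real.sin (x/2))^lam + (2*Real.sin (3*x/2))^lam)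
      = fun x => 2*(2*Real.sin ((1/2)*x))^lam + (2*Real.sin ((3/2)*x))^lam := by
    funext x
    rw [show x/2 = (1/2)*x by ring, show 3*x/2 = (3/2)*x by ring]
  have hA := concave_aux lam hlam0 hlam1 (show (0:ℝ) ≤ 1/2 by norm_num)
    (fun x hx => by simp only [mem_Icc] at hx ⊢; constructor <;> nlinarith [hx.1, hx.2, pi_pos])
  have hB := concave_aux lam hlam0 hlam1 (show (0:ℝ) ≤ 3/2 by norm_num)
    (fun x hx => by simp only [mem_Icc] at hx ⊢; constructor <;> nlinarith [hx.1, hx.2, pi_pos])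
  have hF : ConcaveOn ℝ (Set.Icc (Real.pi/3) (Real.pi/2))
      (fun x:ℝ => 2*(2*Real.sin (x/2))^lam + (2*Real.sin (3*x/2))^lam) := by
    rw [e1]
    have := (hA.smul (show (0:ℝ) ≤ 2 by norm_num)).add hB
    simpa [Pi.add_def, smul_eq_mul] using this
  constructor
  · exact hF.subset (Set.Ico_subset_Icc_self) (convex_Ico _ _)
  -- values
  have hv3 : 2*(2*Real.sin ((Real.pi/3)/2))^lam + (2*Real.sin (3*(Real.pi/3)/2))^lam
      = 2 + (2:ℝ)^lam := by
    rw [show (Real.pi/3)/2 = Real.pi/6 by ring, show 3*(Real.pi/3)/2 = Real.pi/2 by ring,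
      Real.sin_pi_div_six, Real.sin_pi_div_two]
    norm_num
  have hv2 : 2*(2*Real.sin ((Real.pi/2)/2))^lam + (2*Real.sin (3*(Real.pi/2)/2))^lam
      = 3 * (Real.sqrt 2)^lam := by
    rw [show (Real.pi/2)/2 = Real.pi/4 by ring,
      show 3*(Real.pi/2)/2 = Real.pi - Real.pi/4 by ring,
      Real.sin_pi_sub, Real.sin_pi_div_four,
      show 2*(Real.sqrt 2/2) = Real.sqrt 2 by ring]
    ring
  -- √2^lam bounds
  set t := (Real.sqrt 2)^lam with ht
  have hs2 : Real.sqrt 2 ^ (2:ℕ) = 2 := Real.sq_sqrt (by norm_num)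
  have hs2' : (1:ℝ) < Real.sqrt 2 := by nlinarith [Real.sqrt_nonneg 2]
  have ht1 : 1 < t := Real.one_lt_rpow_iff_of_pos (by positivity) |>.2 (Or.inl ⟨hs2', hlam0⟩)
  have ht2 : t < 2 := by
    have : t < (Real.sqrt 2)^(1:ℝ) := Real.rpow_lt_rpow_of_exponent_lt hs2' hlam1
    rw [Real.rpow_one] at this
    nlinarith
  have htsq : t^(2:ℕ) = (2:ℝ)^lam := by
    rw [ht, ← Real.rpow_natCast ((Real.sqrt 2)^lam) 2, ← Real.rpow_mul (Real.sqrt_nonneg 2),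
      show lam * (2:ℕ) = (2:ℕ) * lam by push_cast; ring,
      Real.rpow_mul (Real.sqrt_nonneg 2), Real.rpow_natCast, hs2]
  have hgt : 2 + (2:ℝ)^lam < 3 * t := by nlinarith
  -- main
  intro x hx
  obtain ⟨hx1, hx2⟩ := hx
  set b := (x - Real.pi/3) / (Real.pi/6) with hb_def
  have hb0 : 0 ≤ b := div_nonneg (by linarith) (by positivity)
  have hb1 : b < 1 := by
    rw [hb_def, div_lt_one (by positivity)]
    linarith
  have hab : (1-b) + b = 1 := by ring
  have hpt : (1-b) • (Real.pi/3) + b • (Real.pi/2) = x := by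
    simp only [smul_eq_mul]
    rw [hb_def]
    field_simp
    ring
  have hkey := hF.2 (show Real.pi/3 ∈ Set.Icc (Real.pi/3) (Real.pi/2) by
      constructor <;> linarith)
    (show Real.pi/2 ∈ Set.Icc (Real.pi/3) (Real.pi/2) by constructor <;> linarith)
    (by linarith : (0:ℝ) ≤ 1 - b) hb0 hab
  rw [hpt] at hkey
  simp only [smul_eq_mul] at hkey
  rw [hv3, hv2] at hkey
  have hstep : b * (2 + (2:ℝ)^lam) ≤ b * (3*t) := mul_le_mul_of_nonneg_left hgt.le hb0
  constructor
  · linarith [hkey, hstep]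
  · intro heq
    rw [heq] at hkey
    rcases eq_or_lt_of_le hb0 with hbz | hbp
    · have : x - Real.pi/3 = 0 := by
        rw [hb_def] at hbz
        have := hbz.symm
        rw [div_eq_zero_iff] at this
        rcases this with h | h
        · linarith
        · linarith
      linarith
    · exfalso
      have hlt : b * (2 + (2:ℝ)^lam) < b * (3*t) := by
        exact mul_lt_mul_of_pos_left hgt hbp
      nlinarith [hkey, hlt]
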